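/- If the uncertainty set is full-dimensional (S = ∅, i.e., ū_i > 0 for all i) and z(u) = Du + r is an AAR solution of the uncertain LCP, then all non-adjustable variables are zero: r_i = 0 for all i ∈ [h]. -/

import Mathlib

open Matrix BigOperators
open scoped Classical

noncomputable section

/-- `u` lies in the box `[-ū, ū]`. -/
def inBox {n : ℕ} (ubar u : Fin n → ℝ) : Prop :=
  ∀ i, -ubar i ≤ u i ∧ u i ≤ ubar i

/-- `z` solves the LCP with matrix `M` and vector `q`. -/
def IsLCPSol {n : ℕ} (M : Matrix (Fin n) (Fin n) ℝ) (q z : Fin n → ℝ) : Prop :=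
  (∀ i, 0 ≤ z i) ∧ (∀ i, 0 ≤ (M.mulVec z + q) i) ∧
    ∑ i, z i * (M.mulVec z + q) i = 0

/-- `z(u) = D u + r` is an affinely adjustable robust solution of the
uncertain LCP with vector `q(u) = q̄ + u`. -/
def IsAAR {n : ℕ} (M : Matrix (Fin n) (Fin n) ℝ) (qbar ubar : Fin n → ℝ)
    (D : Matrix (Fin n) (Fin n) ℝ) (r : Fin n → ℝ) : Prop :=
  ∀ u, inBox ubar u → IsLCPSol M (qbar + u) (D.mulVec u + r)

/-- if the box uncertainty set is full-dimensional and
`z(u) = Du + r` is an AAR solution with `h` non-adjustable variables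
(`D_{[h],·} = 0`), then `r_i = 0` for all `i ∈ [h]`. -/
theorem stmt_6 (n h : ℕ) (M : Matrix (Fin n) (Fin n) ℝ) (qbar ubar : Fin n → ℝ)
    (hubar : ∀ i, 0 < ubar i)
    (D : Matrix (Fin n) (Fin n) ℝ) (r : Fin n → ℝ)
    (hDh : ∀ i : Fin n, (i : ℕ) < h → ∀ j, D i j = 0)
    (hAAR : IsAAR M qbar ubar D r) :
    ∀ i : Fin n, (i : ℕ) < h → r i = 0 := by
  intro i hih
  by_contra hri
  classical
  set z : (Fin n → ℝ) → (Fin n → ℝ) := fun u => D.mulVec u + r with hzdef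
  set w : (Fin n → ℝ) → (Fin n → ℝ) := fun u => M.mulVec (z u) + (qbar + u) with hwdef
  have hbox0 : inBox ubar 0 := by
    intro k
    constructor
    · simp only [Pi.zero_apply]
      linarith [hubar k]
    · simp only [Pi.zero_apply]
      linarith [hubar k]
  have hboxsingle : ∀ k, inBox ubar (Pi.single k (ubar k)) := by
    intro k m
    rcases eq_or_ne m k with hm | hm
    · subst hm
      simp only [Pi.single_eq_same]
      constructor <;> linarith [hubar m]
    · rw [Pi.single_eq_of_ne hm]
      constructor <;> linarith [hubar m]
  have hznn : ∀ u, inBox ubar u → ∀ j, 0 ≤ z u j := fun u hu => (hAAR u hu).1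
  have hwnn : ∀ u, inBox ubar u → ∀ j, 0 ≤ w u j := fun u hu => (hAAR u hu).2.1
  have hcomp : ∀ u, inBox ubar u → ∀ j, z u j * w u j = 0 := by
    intro u hu j
    have h3 := (hAAR u hu).2.2
    exact (Finset.sum_eq_zero_iff_of_nonneg
      (fun m _ => mul_nonneg (hznn u hu m) (hwnn u hu m))).mp h3 j (Finset.mem_univ j)
  have hzi : ∀ u, z u i = r i := by
    intro u
    simp [hzdef, Matrix.mulVec, dotProduct, hDh i hih]
  have hri' : 0 < r i := by
    have := hznn 0 hbox0 i
    rw [hzi] at this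
    exact this.lt_of_ne (Ne.symm hri)
  -- affine midpoint identities
  have hzmidf : ∀ u v : Fin n → ℝ, z ((2⁻¹ : ℝ) • (u + v)) = (2⁻¹ : ℝ) • (z u + z v) := by
    intro u v
    funext j
    simp only [hzdef, Matrix.mulVec_smul, Matrix.mulVec_add, Pi.add_apply, Pi.smul_apply,
      smul_eq_mul]
    ring
  have hwmid : ∀ u v : Fin n → ℝ, ∀ j, w ((2⁻¹ : ℝ) • (u + v)) j = (w u j + w v j) / 2 := by
    intro u v j
    simp only [hwdef, hzmidf u v, Matrix.mulVec_smul, Matrix.mulVec_add, Pi.add_apply,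
      Pi.smul_apply, smul_eq_mul]
    ring
  have hzmid : ∀ u v : Fin n → ℝ, ∀ j, z ((2⁻¹ : ℝ) • (u + v)) j = (z u j + z v j) / 2 := by
    intro u v j
    rw [hzmidf u v]
    simp only [Pi.smul_apply, Pi.add_apply, smul_eq_mul]
    ring
  have hmidbox : ∀ u v, inBox ubar u → inBox ubar v → inBox ubar ((2⁻¹ : ℝ) • (u + v)) := by
    intro u v hu hv k
    obtain ⟨a, b⟩ := hu k
    obtain ⟨c, d⟩ := hv k
    simp only [Pi.smul_apply, Pi.add_apply, smul_eq_mul]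
    constructor <;> linarith
  -- active components
  set p : Fin n → Prop := fun j => ∃ u, inBox ubar u ∧ z u j ≠ 0 with hpdef
  have hpactive_w : ∀ j, p j → ∀ u, inBox ubar u → w u j = 0 := by
    rintro j ⟨u0, hu0, hz0⟩ u hu
    have hz0' : 0 < z u0 j := (hznn u0 hu0 j).lt_of_ne (Ne.symm hz0)
    have hw0 : w u0 j = 0 := by
      rcases mul_eq_zero.mp (hcomp u0 hu0 j) with hA | hA
      · exact absurd hA hz0'.ne'
      · exact hA
    have hmb := hmidbox u0 u hu0 hu
    have hzm : 0 < z ((2⁻¹ : ℝ) • (u0 + u)) j := by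
      rw [hzmid]
      have := hznn u hu j
      linarith
    have hwm : w ((2⁻¹ : ℝ) • (u0 + u)) j = 0 := by
      rcases mul_eq_zero.mp (hcomp _ hmb j) with hA | hA
      · exact absurd hA hzm.ne'
      · exact hA
    rw [hwmid] at hwm
    linarith
  have hpi : p i := ⟨0, hbox0, by rw [hzi]; exact hri⟩
  -- inactive rows of D are zero (and r there is zero)
  have hinact : ∀ m, ¬ p m → ∀ k, D m k = 0 := by
    intro m hm
    have hm' : ∀ u, inBox ubar u → z u m = 0 := by
      intro u hu
      by_contra hne
      exact hm ⟨u, hu, hne⟩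
    have hr0 : r m = 0 := by
      have h0 := hm' 0 hbox0
      simpa [hzdef] using h0
    intro k
    have hk := hm' (Pi.single k (ubar k)) (hboxsingle k)
    have hDk : D m k * ubar k = 0 := by
      simpa [hzdef, Matrix.mulVec_single, hr0] using hk
    exact (mul_eq_zero.mp hDk).resolve_right (hubar k).ne'
  -- coefficient identity for active rows
  have hcoef : ∀ j, p j → ∀ k, (∑ m, M j m * D m k) = -(if j = k then (1 : ℝ) else 0) := by
    intro j hj k
    have h0 := hpactive_w j hj 0 hbox0
    have h1 := hpactive_w j hj (Pi.single k (ubar k)) (hboxsingle k)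
    have e0 : (∑ m, M j m * r m) + qbar j = 0 := by
      simpa [hwdef, hzdef, Matrix.mulVec, dotProduct] using h0
    have e1 : (∑ m, M j m * (D m k * ubar k + r m)) + qbar j
        + (if j = k then ubar k else 0) = 0 := by
      have hh := h1
      simp only [hwdef, hzdef, Matrix.mulVec_single, Matrix.mulVec, dotProduct, Pi.add_apply,
        Pi.single_apply, Pi.smul_apply, Matrix.col_apply, op_smul_eq_mul] at hh
      linarith [hh]
    have esplit : (∑ m, M j m * (D m k * ubar k + r m))
        = (∑ m, M j m * D m k) * ubar k + ∑ m, M j m * r m := by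
      rw [Finset.sum_mul]
      rw [← Finset.sum_add_distrib]
      congr 1
      funext m
      ring
    rw [esplit] at e1
    have hcoef0 : (∑ m, M j m * D m k) * ubar k + (if j = k then ubar k else 0) = 0 := by
      linarith
    rcases eq_or_ne j k with hjk | hjk
    · simp only [hjk, if_true] at hcoef0 ⊢
      have hu := hubar k
      have : ((∑ m, M k m * D m k) + 1) * ubar k = 0 := by ring_nf; ring_nf at hcoef0; linarith
      have h2 := (mul_eq_zero.mp this).resolve_right hu.ne'
      linarith
    · simp only [hjk, if_false] at hcoef0 ⊢
      rw [add_zero] at hcoef0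
      have h2 := (mul_eq_zero.mp hcoef0).resolve_right (hubar k).ne'
      simpa using h2
  -- build the submatrix contradiction
  haveI : DecidablePred p := Classical.decPred p
  set M' : Matrix {j // p j} {j // p j} ℝ := fun a b => M a.val b.val with hM'
  set D' : Matrix {j // p j} {j // p j} ℝ := fun a b => D a.val b.val with hD'
  have hMD : M' * D' = -1 := by
    ext a b
    rw [Matrix.mul_apply]
    have hsub : (∑ m : {j // p j}, M a.val m.val * D m.val b.val)
        = ∑ m : Fin n, M a.val m * D m b.val := by
      rw [← Finset.sum_subtype (Finset.univ.filter p) (by simp)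
        (fun m => M a.val m * D m b.val)]
      exact Finset.sum_filter_of_ne (fun m _ hne => by
        by_contra hpm
        exact hne (by rw [hinact m hpm b.val]; ring))
    have := hcoef a.val a.property b.val
    rw [hM', hD']
    simp only [Matrix.neg_apply, Matrix.one_apply]
    rw [hsub, this]
    congr 1
    simp [Subtype.ext_iff]
  have hone : D' * (-M') = 1 := by
    rw [← mul_eq_one_comm]
    rw [Matrix.neg_mul, hMD, neg_neg]
  have hentry : (D' * (-M')) ⟨i, hpi⟩ ⟨i, hpi⟩ = 1 := by
    rw [hone]
    simp [Matrix.one_apply]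
  rw [Matrix.mul_apply] at hentry
  have hzero : (∑ m : {j // p j}, D' ⟨i, hpi⟩ m * (-M') m ⟨i, hpi⟩) = 0 :=
    Finset.sum_eq_zero fun m _ => by
      rw [hD']
      simp only
      rw [hDh i hih m.val]
      ring
  rw [hzero] at hentry
  exact zero_ne_one hentry
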